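/- Let P = ∏_{1≤j<k≤15} (1 + t_j + t_k) in 𝔽₂[t₁,…,t₁₅], and for d ≥ 0 let P_d denote the homogeneous component of P of degree d. Then P₁ and P₂ lie in the ideal generated by e₁ and e₂, and P₄ is congruent to e₄ modulo the ideal generated by e₁, e₂, e₃. -/

import Mathlib

open MvPolynomial Finset

/-- The `i`-th elementary symmetric polynomial in `𝔽₂[t₁,…,t₁₅]`. -/
noncomputable def e (i : ℕ) : MvPolynomial (Fin 15) (ZMod 2) :=
  esymm (Fin 15) (ZMod 2) i

/-- `P = ∏_{1≤j<k≤15} (1 + t_j + t_k)` in `𝔽₂[t₁,…,t₁₅]`. -/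
noncomputable def P : MvPolynomial (Fin 15) (ZMod 2) :=
  ∏ p ∈ univ.filter (fun p : Fin 15 × Fin 15 => p.1 < p.2), (1 + X p.1 + X p.2)

namespace Lambda2Aux

abbrev R2 := ZMod 2

/-- The point (1,1,1,1,0,…,0). -/
def pt : Fin 15 → R2 := fun i => if i.val < 4 then 1 else 0

lemma esymm_isHomogeneous (k : ℕ) :
    (esymm (Fin 15) R2 k).IsHomogeneous k := by
  rw [MvPolynomial.esymm]
  apply IsHomogeneous.sum
  intro t ht
  have := IsHomogeneous.prod t (fun i => (X i : MvPolynomial (Fin 15) R2)) (fun _ => 1)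
    (fun i _ => isHomogeneous_X _ _)
  simpa [(mem_powersetCard.mp ht).2] using this

/-- P is symmetric. -/
lemma P_symm : MvPolynomial.IsSymmetric P := by
  intro g
  rw [P, map_prod]
  have key : ∀ p : Fin 15 × Fin 15,
      rename (⇑g) (1 + X p.1 + X p.2 : MvPolynomial (Fin 15) R2)
        = 1 + X (g p.1) + X (g p.2) := by
    intro p; simp [map_add]
  simp_rw [key]
  refine Finset.prod_nbij' (fun p => if g p.1 < g p.2 then (g p.1, g p.2) else (g p.2, g p.1))
    (fun q => if g.symm q.1 < g.symm q.2 then (g.symm q.1, g.symm q.2)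
      else (g.symm q.2, g.symm q.1)) ?_ ?_ ?_ ?_ ?_
  · intro p hp
    simp only [mem_filter, mem_univ, true_and] at hp ⊢
    have hne : g p.1 ≠ g p.2 := fun h => absurd (g.injective h) (ne_of_lt hp)
    rcases lt_or_gt_of_ne hne with h | h
    · simpa [h] using h
    · have : ¬ g p.1 < g p.2 := not_lt_of_gt h
      simpa [this] using h
  · intro q hq
    simp only [mem_filter, mem_univ, true_and] at hq ⊢
    have hne : g.symm q.1 ≠ g.symm q.2 := fun h => absurd (g.symm.injective h) (ne_of_lt hq)
    rcases lt_or_gt_of_ne hne with h | h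
    · simpa [h] using h
    · have : ¬ g.symm q.1 < g.symm q.2 := not_lt_of_gt h
      simpa [this] using h
  · intro p hp
    simp only [mem_filter, mem_univ, true_and] at hp
    have hne : g p.1 ≠ g p.2 := fun h => absurd (g.injective h) (ne_of_lt hp)
    rcases lt_or_gt_of_ne hne with h | h
    · simp [h, hp]
    · have h' : ¬ g p.1 < g p.2 := not_lt_of_gt h
      have h'' : ¬ p.2 < p.1 := not_lt_of_gt hp
      simp [h', h, h'']
  · intro q hq
    simp only [mem_filter, mem_univ, true_and] at hq
    have hne : g.symm q.1 ≠ g.symm q.2 := fun h => absurd (g.symm.injective h) (ne_of_lt hq)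
    rcases lt_or_gt_of_ne hne with h | h
    · simp [h, hq]
    · have h' : ¬ g.symm q.1 < g.symm q.2 := not_lt_of_gt h
      have h'' : ¬ q.2 < q.1 := not_lt_of_gt hq
      simp [h', h, h'']
  · intro p hp
    by_cases h : g p.1 < g p.2
    · simp [h]
    · simp only [h, if_false]
      ring

/-- homogeneousComponent commutes with rename by a permutation. -/
lemma hc_rename (g : Equiv.Perm (Fin 15)) (n : ℕ) (p : MvPolynomial (Fin 15) R2) :
    homogeneousComponent n (rename (⇑g) p) = rename (⇑g) (homogeneousComponent n p) := by
  conv_lhs => rw [← sum_homogeneousComponent p]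
  rw [map_sum, map_sum]
  have key : ∀ i, homogeneousComponent n (rename (⇑g) (homogeneousComponent i p))
      = if n = i then rename (⇑g) (homogeneousComponent i p) else 0 := by
    intro i
    exact homogeneousComponent_of_mem
      ((homogeneousComponent_isHomogeneous i p).rename_isHomogeneous)
  simp_rw [key]
  rw [Finset.sum_ite_eq (Finset.range (p.totalDegree + 1))]
  by_cases hn : n ∈ Finset.range (p.totalDegree + 1)
  · rw [if_pos hn]
  · rw [if_neg hn]
    rw [Finset.mem_range, not_lt] at hn
    rw [homogeneousComponent_eq_zero _ _ (by omega), map_zero]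

lemma hcP_symm (n : ℕ) : (homogeneousComponent n P).IsSymmetric := by
  intro g
  rw [← hc_rename, P_symm g]

/-- Decomposition of a symmetric homogeneous polynomial via FTSP. -/
lemma decomposition {f : MvPolynomial (Fin 15) R2} (hs : f.IsSymmetric)
    (hh : f.IsHomogeneous d) :
    ∃ (T : Finset (Fin 15 →₀ ℕ)) (c : (Fin 15 →₀ ℕ) → R2),
      (∀ v ∈ T, ∑ i : Fin 15, ((i : ℕ) + 1) * v i = d) ∧
      f = ∑ v ∈ T, MvPolynomial.C (c v) *
          ∏ i : Fin 15, esymm (Fin 15) R2 ((i : ℕ) + 1) ^ v i := by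
  obtain ⟨F, hF⟩ := esymmAlgHom_surjective (σ := Fin 15) R2 (n := 15)
    (by simp) ⟨f, (mem_symmetricSubalgebra f).mpr hs⟩
  have hf : f = aeval (fun i : Fin 15 => esymm (Fin 15) R2 ((i : ℕ) + 1)) F := by
    rw [← esymmAlgHom_apply, hF]
  -- expand F into monomials
  have hsum : f = ∑ v ∈ F.support, MvPolynomial.C (coeff v F) *
      ∏ i : Fin 15, esymm (Fin 15) R2 ((i : ℕ) + 1) ^ v i := by
    conv_lhs => rw [hf, MvPolynomial.as_sum F]
    rw [map_sum]
    refine Finset.sum_congr rfl fun v _ => ?_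
    rw [aeval_monomial, Finsupp.prod_fintype _ _ (fun i => pow_zero _)]
    rfl
  -- each term is homogeneous of its weight
  have hterm : ∀ v : Fin 15 →₀ ℕ,
      (MvPolynomial.C (coeff v F) *
        ∏ i : Fin 15, esymm (Fin 15) R2 ((i : ℕ) + 1) ^ v i).IsHomogeneous
        (∑ i : Fin 15, ((i : ℕ) + 1) * v i) := by
    intro v
    apply IsHomogeneous.C_mul
    exact IsHomogeneous.prod (univ : Finset (Fin 15))
      (fun i => esymm (Fin 15) R2 ((i : ℕ) + 1) ^ v i)
      (fun i => ((i : ℕ) + 1) * v i)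
      (fun i _ => (esymm_isHomogeneous ((i : ℕ) + 1)).pow (v i))
  refine ⟨F.support.filter (fun v => ∑ i : Fin 15, ((i : ℕ) + 1) * v i = d),
    fun v => coeff v F, fun v hv => (Finset.mem_filter.mp hv).2, ?_⟩
  have hfd : homogeneousComponent d f = f :=
    (homogeneousComponent_of_mem hh).trans (if_pos rfl)
  conv_lhs => rw [← hfd, hsum]
  rw [map_sum]
  rw [Finset.sum_filter]
  refine Finset.sum_congr rfl fun v _ => ?_
  rw [homogeneousComponent_of_mem (hterm v)]
  by_cases h : ∑ i : Fin 15, ((i : ℕ) + 1) * v i = d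
  · rw [if_pos h.symm, if_pos h]
  · rw [if_neg (fun hh' => h hh'.symm), if_neg h]

lemma mem_span_of_dvd {a x : MvPolynomial (Fin 15) R2} {S : Set (MvPolynomial (Fin 15) R2)}
    (ha : a ∈ S) (h : a ∣ x) : x ∈ Ideal.span S := by
  obtain ⟨y, rfl⟩ := h
  exact Ideal.mul_mem_right _ _ (Ideal.subset_span ha)

lemma dvd_of_pos {v : Fin 15 →₀ ℕ} {i : Fin 15} (h : 0 < v i) :
    esymm (Fin 15) R2 ((i : ℕ) + 1) ∣ ∏ j : Fin 15, esymm (Fin 15) R2 ((j : ℕ) + 1) ^ v j :=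
  dvd_trans (dvd_pow_self _ (by omega : v i ≠ 0))
    (Finset.dvd_prod_of_mem _ (mem_univ i))


section Classify

variable {v : Fin 15 →₀ ℕ}

lemma le_term {d : ℕ} (h : ∑ i : Fin 15, ((i : ℕ) + 1) * v i = d) (i : Fin 15) :
    ((i : ℕ) + 1) * v i ≤ d := by
  subst h
  exact Finset.single_le_sum (f := fun j : Fin 15 => ((j : ℕ) + 1) * v j)
    (fun _ _ => Nat.zero_le _) (mem_univ i)

lemma term_big {i : Fin 15} (h : 0 < v i) : (i : ℕ) + 1 ≤ ((i : ℕ) + 1) * v i :=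
  Nat.le_mul_of_pos_right _ h

lemma class1 (h : ∑ i : Fin 15, ((i : ℕ) + 1) * v i = 1) : 0 < v 0 := by
  by_contra h0
  have hz : ∀ i : Fin 15, ((i : ℕ) + 1) * v i = 0 := by
    intro i
    by_cases hvi : 0 < v i
    · have h1 := le_term h i
      have h2 := term_big hvi
      have : (i : ℕ) = 0 := by omega
      have : i = 0 := Fin.ext (by simpa using this)
      subst this
      omega
    · have : v i = 0 := by omega
      simp [this]
  rw [Finset.sum_eq_zero (fun i _ => hz i)] at h
  omega

lemma class2 (h : ∑ i : Fin 15, ((i : ℕ) + 1) * v i = 2) : 0 < v 0 ∨ 0 < v 1 := by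
  by_contra h0
  push_neg at h0
  have hz : ∀ i : Fin 15, ((i : ℕ) + 1) * v i = 0 := by
    intro i
    by_cases hvi : 0 < v i
    · have h1 := le_term h i
      have h2 := term_big hvi
      have hle : (i : ℕ) ≤ 1 := by omega
      have : i = 0 ∨ i = 1 := by
        rcases Nat.le_one_iff_eq_zero_or_eq_one.mp hle with h' | h'
        · exact Or.inl (Fin.ext (by simpa using h'))
        · exact Or.inr (Fin.ext (by simpa using h'))
      rcases this with rfl | rfl <;> omega
    · have : v i = 0 := by omega
      simp [this]
  rw [Finset.sum_eq_zero (fun i _ => hz i)] at h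
  omega

lemma class4 (h : ∑ i : Fin 15, ((i : ℕ) + 1) * v i = 4) :
    0 < v 0 ∨ 0 < v 1 ∨ 0 < v 2 ∨ (v 3 = 1 ∧ ∀ i : Fin 15, i ≠ 3 → v i = 0) := by
  by_cases h0 : 0 < v 0
  · exact Or.inl h0
  by_cases h1 : 0 < v 1
  · exact Or.inr (Or.inl h1)
  by_cases h2 : 0 < v 2
  · exact Or.inr (Or.inr (Or.inl h2))
  refine Or.inr (Or.inr (Or.inr ?_))
  have hz : ∀ i : Fin 15, i ≠ 3 → ((i : ℕ) + 1) * v i = 0 := by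
    intro i hne
    by_cases hvi : 0 < v i
    · have hle := le_term h i
      have hbig := term_big hvi
      have hval : (i : ℕ) ≤ 3 := by omega
      have : i = 0 ∨ i = 1 ∨ i = 2 ∨ i = 3 := by
        have : (i : ℕ) = 0 ∨ (i : ℕ) = 1 ∨ (i : ℕ) = 2 ∨ (i : ℕ) = 3 := by omega
        rcases this with h' | h' | h' | h'
        · exact Or.inl (Fin.ext (by simpa using h'))
        · exact Or.inr (Or.inl (Fin.ext (by simpa using h')))
        · exact Or.inr (Or.inr (Or.inl (Fin.ext (by simpa using h'))))
        · exact Or.inr (Or.inr (Or.inr (Fin.ext (by simpa using h'))))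
      rcases this with rfl | rfl | rfl | rfl
      · have hv : v 0 = 0 := by omega
        simp [hv]
      · have hv : v 1 = 0 := by omega
        simp [hv]
      · have hv : v 2 = 0 := by omega
        simp [hv]
      · exact absurd rfl hne
    · have : v i = 0 := by omega
      simp [this]
  have hsum : ∑ i : Fin 15, ((i : ℕ) + 1) * v i = (((3 : Fin 15) : ℕ) + 1) * v 3 :=
    Finset.sum_eq_single_of_mem _ (mem_univ _) (fun i _ hne => hz i hne)
  rw [hsum] at h
  have h3 : v 3 = 1 := by
    have : ((3 : Fin 15) : ℕ) = 3 := rfl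
    omega
  refine ⟨h3, fun i hne => ?_⟩
  have h' := hz i hne
  rcases Nat.mul_eq_zero.mp h' with h'' | h''
  · omega
  · exact h''

end Classify

section Eval

/-- indices where `pt` equals 1. -/
def ones : Finset (Fin 15) := univ.filter (fun i => i.val < 4)

lemma card_ones : ones.card = 4 := by decide

lemma prod_pt (t : Finset (Fin 15)) :
    (∏ i ∈ t, pt i) = if t ⊆ ones then 1 else 0 := by
  by_cases h : t ⊆ ones
  · rw [if_pos h]
    refine Finset.prod_eq_one fun i hi => ?_
    have : i ∈ ones := h hi
    simp only [ones, mem_filter] at this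
    simp [pt, this.2]
  · rw [if_neg h]
    obtain ⟨i, hit, hio⟩ := Finset.not_subset.mp h
    refine Finset.prod_eq_zero hit ?_
    simp only [ones, mem_filter, mem_univ, true_and] at hio
    simp [pt, hio]

lemma eval_esymm (k : ℕ) :
    eval pt (esymm (Fin 15) R2 k) = ((Nat.choose 4 k : ℕ) : R2) := by
  rw [MvPolynomial.esymm, map_sum]
  simp_rw [map_prod, eval_X, prod_pt]
  rw [Finset.sum_boole]
  have hfil : (powersetCard k univ).filter (fun t : Finset (Fin 15) => t ⊆ ones)
      = powersetCard k ones := by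
    ext t
    simp only [mem_filter, mem_powersetCard]
    constructor
    · rintro ⟨⟨-, hc⟩, hsub⟩
      exact ⟨hsub, hc⟩
    · rintro ⟨hsub, hc⟩
      exact ⟨⟨subset_univ t, hc⟩, hsub⟩
  rw [hfil, Finset.card_powersetCard, card_ones]

end Eval


section Phi

noncomputable def phi : MvPolynomial (Fin 15) R2 →+* Polynomial R2 :=
  eval₂Hom Polynomial.C (fun i => Polynomial.C (pt i) * Polynomial.X)

lemma phi_homog {q : MvPolynomial (Fin 15) R2} {n : ℕ} (h : q.IsHomogeneous n) :
    phi q = Polynomial.C (eval pt q) * Polynomial.X ^ n := by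
  rw [phi, coe_eval₂Hom, eval₂_eq, eval_eq, map_sum, Finset.sum_mul]
  refine Finset.sum_congr rfl fun d hd => ?_
  have hdeg : ∑ i ∈ d.support, d i = n := by
    by_contra hne
    exact mem_support_iff.mp hd (h.coeff_eq_zero (d := d) hne)
  have hprod : ∏ i ∈ d.support, (Polynomial.C (pt i) * Polynomial.X) ^ d i
      = Polynomial.C (∏ i ∈ d.support, pt i ^ d i) * Polynomial.X ^ n := by
    simp_rw [mul_pow]
    rw [Finset.prod_mul_distrib, Finset.prod_pow_eq_pow_sum, hdeg, map_prod]
    simp_rw [map_pow]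
  rw [hprod, map_mul, mul_assoc]

lemma phi_coeff (n : ℕ) : (phi P).coeff n = eval pt (homogeneousComponent n P) := by
  conv_lhs => rw [← sum_homogeneousComponent P]
  rw [map_sum, Polynomial.finset_sum_coeff]
  have key : ∀ i, (phi (homogeneousComponent i P)).coeff n
      = if n = i then eval pt (homogeneousComponent i P) else 0 := by
    intro i
    rw [phi_homog (homogeneousComponent_isHomogeneous i P), Polynomial.coeff_C_mul,
      Polynomial.coeff_X_pow]
    split <;> simp
  simp_rw [key]
  rw [Finset.sum_ite_eq (Finset.range (P.totalDegree + 1))]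
  by_cases hn : n ∈ Finset.range (P.totalDegree + 1)
  · rw [if_pos hn]
  · rw [if_neg hn]
    rw [Finset.mem_range, not_lt] at hn
    rw [homogeneousComponent_eq_zero _ _ (by omega), map_zero]

lemma card44 : ((univ.filter (fun p : Fin 15 × Fin 15 => p.1 < p.2)).filter
    (fun p => pt p.1 + pt p.2 = 1)).card = 44 := by decide

lemma phi_P : phi P = (1 + Polynomial.X) ^ 44 := by
  have key : ∀ p : Fin 15 × Fin 15, phi (1 + X p.1 + X p.2)
      = 1 + Polynomial.C (pt p.1 + pt p.2) * Polynomial.X := by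
    intro p
    rw [map_add, map_add, map_one, phi, eval₂Hom_X', eval₂Hom_X', map_add, add_mul, add_assoc]
  rw [P, map_prod]
  simp_rw [key]
  rw [← Finset.prod_filter_mul_prod_filter_not
    (univ.filter (fun p : Fin 15 × Fin 15 => p.1 < p.2)) (fun p => pt p.1 + pt p.2 = 1)]
  have h1 : ∏ p ∈ (univ.filter (fun p : Fin 15 × Fin 15 => p.1 < p.2)).filter
      (fun p => pt p.1 + pt p.2 = 1), (1 + Polynomial.C (pt p.1 + pt p.2) * Polynomial.X)
      = (1 + Polynomial.X) ^ 44 := by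
    rw [Finset.prod_congr rfl (fun p hp => ?_), Finset.prod_const, card44]
    rw [(Finset.mem_filter.mp hp).2, map_one, one_mul]
  have h2 : ∏ p ∈ (univ.filter (fun p : Fin 15 × Fin 15 => p.1 < p.2)).filter
      (fun p => ¬ pt p.1 + pt p.2 = 1), (1 + Polynomial.C (pt p.1 + pt p.2) * Polynomial.X)
      = 1 := by
    refine Finset.prod_eq_one fun p hp => ?_
    have h0 : pt p.1 + pt p.2 = 0 := by
      have := (Finset.mem_filter.mp hp).2
      revert this
      have : ∀ x : R2, x ≠ 1 → x = 0 := by decide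
      exact this _
    rw [h0, map_zero, zero_mul, add_zero]
  rw [h1, h2, mul_one]

lemma eval_hc4 : eval pt (homogeneousComponent 4 P) = 1 := by
  rw [← phi_coeff, phi_P, Polynomial.coeff_one_add_X_pow]
  have : Nat.choose 44 4 = 135751 := by norm_num [Nat.choose]
  rw [this]
  decide

end Phi

end Lambda2Aux

/-- the homogeneous components `P₁` and `P₂` of `P` lie in the
ideal `(e₁, e₂)`, and `P₄` is congruent to `e₄` modulo the ideal `(e₁, e₂, e₃)`. -/
theorem lambda2_spin15_low_degrees :
    homogeneousComponent 1 P ∈ Ideal.span {e 1, e 2} ∧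
    homogeneousComponent 2 P ∈ Ideal.span {e 1, e 2} ∧
    homogeneousComponent 4 P - e 4 ∈ Ideal.span {e 1, e 2, e 3} := by
  classical
  open Lambda2Aux in
  refine ⟨?_, ?_, ?_⟩
  · obtain ⟨T, c, hw, hrep⟩ := decomposition (hcP_symm 1)
      (homogeneousComponent_isHomogeneous 1 P)
    rw [hrep]
    refine Ideal.sum_mem _ fun v hv => Ideal.mul_mem_left _ _ ?_
    exact mem_span_of_dvd (show e 1 ∈ ({e 1, e 2} : Set _) by left; rfl)
      (dvd_of_pos (i := 0) (class1 (hw v hv)))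
  · obtain ⟨T, c, hw, hrep⟩ := decomposition (hcP_symm 2)
      (homogeneousComponent_isHomogeneous 2 P)
    rw [hrep]
    refine Ideal.sum_mem _ fun v hv => Ideal.mul_mem_left _ _ ?_
    rcases class2 (hw v hv) with h | h
    · exact mem_span_of_dvd (show e 1 ∈ ({e 1, e 2} : Set _) by left; rfl) (dvd_of_pos (i := 0) h)
    · exact mem_span_of_dvd (show e 2 ∈ ({e 1, e 2} : Set _) by right; rfl) (dvd_of_pos (i := 1) h)
  · obtain ⟨T, c, hw, hrep⟩ := decomposition (hcP_symm 4)
      (homogeneousComponent_isHomogeneous 4 P)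
    set g : (Fin 15 →₀ ℕ) → MvPolynomial (Fin 15) (ZMod 2) :=
      fun v => ∏ i : Fin 15, esymm (Fin 15) R2 ((i : ℕ) + 1) ^ v i with hg
    set good : (Fin 15 →₀ ℕ) → Prop :=
      fun v => v 3 = 1 ∧ ∀ i : Fin 15, i ≠ 3 → v i = 0 with hgood
    have hgv : ∀ v, good v → g v = e 4 := by
      intro v hv
      show (∏ i : Fin 15, esymm (Fin 15) R2 ((i : ℕ) + 1) ^ v i) = e 4
      rw [Finset.prod_eq_single (3 : Fin 15) (fun i _ hne => by rw [hv.2 i hne, pow_zero])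
        (fun h => absurd (Finset.mem_univ _) h)]
      rw [hv.1, pow_one]
      rfl
    have hbad : (∑ v ∈ T.filter (fun v => ¬ good v), MvPolynomial.C (c v) * g v)
        ∈ Ideal.span {e 1, e 2, e 3} := by
      refine Ideal.sum_mem _ fun v hv => Ideal.mul_mem_left _ _ ?_
      obtain ⟨hvT, hvng⟩ := Finset.mem_filter.mp hv
      rcases class4 (hw v hvT) with h | h | h | h
      · exact mem_span_of_dvd (show e 1 ∈ ({e 1, e 2, e 3} : Set _) by left; rfl)
          (dvd_of_pos (i := 0) h)
      · exact mem_span_of_dvd (show e 2 ∈ ({e 1, e 2, e 3} : Set _) by right; left; rfl)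
          (dvd_of_pos (i := 1) h)
      · exact mem_span_of_dvd (show e 3 ∈ ({e 1, e 2, e 3} : Set _) by right; right; rfl)
          (dvd_of_pos (i := 2) h)
      · exact absurd h hvng
    have hrep2 : homogeneousComponent 4 P
        = MvPolynomial.C (∑ v ∈ T.filter good, c v) * e 4
          + ∑ v ∈ T.filter (fun v => ¬ good v), MvPolynomial.C (c v) * g v := by
      rw [hrep, ← Finset.sum_filter_add_sum_filter_not T good
        (fun v => MvPolynomial.C (c v) * g v)]
      congr 1
      rw [Finset.sum_congr rfl (fun v hv => by
        rw [hgv v (Finset.mem_filter.mp hv).2]), ← Finset.sum_mul, map_sum]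
    have hev0 : ∀ x ∈ Ideal.span ({e 1, e 2, e 3} : Set (MvPolynomial (Fin 15) (ZMod 2))),
        eval pt x = 0 := by
      intro x hx
      have hx' := Ideal.mem_map_of_mem (eval pt) hx
      rw [Ideal.map_span] at hx'
      have himg : (⇑(eval pt) '' {e 1, e 2, e 3}) ⊆ {(0 : ZMod 2)} := by
        rintro y ⟨z, hz, rfl⟩
        simp only [Set.mem_insert_iff, Set.mem_singleton_iff] at hz
        rcases hz with rfl | rfl | rfl
        · rw [show e 1 = esymm (Fin 15) R2 1 from rfl, eval_esymm]; decide
        · rw [show e 2 = esymm (Fin 15) R2 2 from rfl, eval_esymm]; decide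
        · rw [show e 3 = esymm (Fin 15) R2 3 from rfl, eval_esymm]; decide
      have hle := Ideal.span_mono himg hx'
      rw [Set.singleton_zero, Ideal.span_zero] at hle
      exact (Ideal.mem_bot).mp hle
    have heval4 : eval pt (e 4) = 1 := by
      rw [show e 4 = esymm (Fin 15) R2 4 from rfl, eval_esymm]
      decide
    have ha : (∑ v ∈ T.filter good, c v) = 1 := by
      have h1 := eval_hc4
      rw [hrep2, map_add, map_mul, hev0 _ hbad, add_zero, MvPolynomial.eval_C,
        heval4, mul_one] at h1
      exact h1
    rw [hrep2, ha, map_one, one_mul, add_sub_cancel_left]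
    exact hbad
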